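/- Let Λ be a square domain, β > 0, f ∈ Harm(Λ)^⊥, and σ = −(Δ_Λ)^{−1} f. Then the IV-GFF m with zero boundary condition satisfies E^IV_{β,Λ,0}[ e^{⟨m,f⟩} ] ≤ exp( ⟨σ,f⟩/(2β) ). -/

import Mathlib

open scoped BigOperators
open MeasureTheory

noncomputable section

namespace IVGFF

attribute [local instance] Classical.propDecidable

/-- Vertices of the square lattice. -/
abbrev V : Type := ℤ × ℤ

/-- The square box with corner `c` and side-length `L`. -/
def box (c : V) (L : ℕ) : Finset V :=
  (Finset.Icc c.1 (c.1 + (L : ℤ) - 1)) ×ˢ (Finset.Icc c.2 (c.2 + (L : ℤ) - 1))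

/-- The boundary of the box with corner `c` and side-length `L`. -/
def bdry (c : V) (L : ℕ) : Finset V :=
  (box c L).filter fun j =>
    j.1 = c.1 ∨ j.1 = c.1 + (L : ℤ) - 1 ∨ j.2 = c.2 ∨ j.2 = c.2 + (L : ℤ) - 1

/-- The interior of the box with corner `c` and side-length `L`. -/
def intr (c : V) (L : ℕ) : Finset V := box c L \ bdry c L

/-- Adjacency in the square lattice: `ℓ¹`-distance one. -/
def adj (j l : V) : Prop := |j.1 - l.1| + |j.2 - l.2| = 1

/-- The edges of the box (each edge appearing once, in a fixed orientation). -/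
def edges (c : V) (L : ℕ) : Finset (V × V) :=
  ((box c L) ×ˢ (box c L)).filter fun p =>
    adj p.1 p.2 ∧ (p.1.1 < p.2.1 ∨ (p.1.1 = p.2.1 ∧ p.1.2 < p.2.2))

/-- Graph distance in the box graph, which coincides with `ℓ¹`-distance. -/
def gdist (j l : V) : ℕ := (|j.1 - l.1| + |j.2 - l.2|).toNat

/-- Distance between two finite sets of vertices. -/
def distFS (A B : Finset V) : ℕ := sInf {n : ℕ | ∃ j ∈ A, ∃ l ∈ B, gdist j l = n}

/-- Inner product `⟨f, g⟩ = Σ_{j ∈ Λ} f_j g_j` of real fields. -/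
def dot (c : V) (L : ℕ) (f g : V → ℝ) : ℝ := ∑ j ∈ box c L, f j * g j

/-- Inner product of an integer field with a real field. -/
def dotI (c : V) (L : ℕ) (m : V → ℤ) (f : V → ℝ) : ℝ := ∑ j ∈ box c L, (m j : ℝ) * f j

/-- The graph Laplacian `(Δ_Λ f)_j = Σ_{l ∼ j} (f_l − f_j)`. -/
def lap (c : V) (L : ℕ) (f : V → ℝ) : V → ℝ :=
  fun j => ∑ l ∈ (box c L).filter (fun l => adj j l), (f l - f j)

/-- Dirichlet energy `Σ_{j∼l} (g_j − g_l)²` for integer fields. -/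
def energyI (c : V) (L : ℕ) (g : V → ℤ) : ℝ :=
  ∑ p ∈ edges c L, ((g p.1 : ℝ) - (g p.2 : ℝ)) ^ 2

/-- Dirichlet energy `Σ_{j∼l} (φ_j − φ_l)²` for real fields. -/
def energyR (c : V) (L : ℕ) (φ : V → ℝ) : ℝ :=
  ∑ p ∈ edges c L, (φ p.1 - φ p.2) ^ 2

/-- Integer-valued configurations with boundary condition `h` (extended by `0` off the box). -/
def ivConfigs (c : V) (L : ℕ) (h : V → ℤ) : Set (V → ℤ) :=
  {g | (∀ j ∈ bdry c L, g j = h j) ∧ ∀ j, j ∉ box c L → g j = 0}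

/-- The IV-GFF Boltzmann weight. -/
def ivWeight (c : V) (L : ℕ) (β : ℝ) (g : V → ℤ) : ℝ :=
  Real.exp (-(β / 2) * energyI c L g)

/-- Partition function of the IV-GFF. -/
def ivZ (c : V) (L : ℕ) (β : ℝ) (h : V → ℤ) : ℝ :=
  ∑' g : ↥(ivConfigs c L h), ivWeight c L β g.1

/-- Probability of an event under the IV-GFF `P^IV_{β,Λ,h}`. -/
def ivProb (c : V) (L : ℕ) (β : ℝ) (h : V → ℤ) (A : Set (V → ℤ)) : ℝ :=
  (∑' g : ↥(ivConfigs c L h ∩ A), ivWeight c L β g.1) / ivZ c L β h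

/-- Expectation under the IV-GFF `E^IV_{β,Λ,h}`. -/
def ivExp (c : V) (L : ℕ) (β : ℝ) (h : V → ℤ) (F : (V → ℤ) → ℝ) : ℝ :=
  (∑' g : ↥(ivConfigs c L h), ivWeight c L β g.1 * F g.1) / ivZ c L β h

/-- Probability under the symmetrized IV-GFF `P^{IV-Sym}_{β,Λ,h}`. -/
def ivSymProb (c : V) (L : ℕ) (β : ℝ) (h : V → ℤ) (A : Set (V → ℤ)) : ℝ :=
  (ivProb c L β h A + ivProb c L β (fun j => -h j) A) / 2

/-- Expectation under the symmetrized IV-GFF `E^{IV-Sym}_{β,Λ,h}`. -/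
def ivSymExp (c : V) (L : ℕ) (β : ℝ) (h : V → ℤ) (F : (V → ℤ) → ℝ) : ℝ :=
  (ivExp c L β h F + ivExp c L β (fun j => -h j) F) / 2

/-- Extension of interior values `x` by boundary values `h` (and by `0` off the box). -/
def extend (c : V) (L : ℕ) (h : V → ℝ) (x : ↥(intr c L) → ℝ) : V → ℝ :=
  fun j => if hj : j ∈ intr c L then x ⟨j, hj⟩ else if j ∈ bdry c L then h j else 0

/-- Partition function of the (real-valued) GFF. -/
def gffZ (c : V) (L : ℕ) (β : ℝ) (h : V → ℝ) : ℝ :=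
  ∫ x : ↥(intr c L) → ℝ, Real.exp (-(β / 2) * energyR c L (extend c L h x))

/-- Expectation under the GFF `E^GFF_{β,Λ,h}`. -/
def gffExp (c : V) (L : ℕ) (β : ℝ) (h : V → ℝ) (F : (V → ℝ) → ℝ) : ℝ :=
  (∫ x : ↥(intr c L) → ℝ,
      F (extend c L h x) * Real.exp (-(β / 2) * energyR c L (extend c L h x))) / gffZ c L β h

/-- Expectation under the symmetrized GFF `E^{GFF-Sym}_{β,Λ,h}`. -/
def gffSymExp (c : V) (L : ℕ) (β : ℝ) (h : V → ℝ) (F : (V → ℝ) → ℝ) : ℝ :=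
  (gffExp c L β h F + gffExp c L β (fun j => -h j) F) / 2

/-- Complex-valued expectation under the GFF. -/
def gffExpC (c : V) (L : ℕ) (β : ℝ) (h : V → ℝ) (F : (V → ℝ) → ℂ) : ℂ :=
  (∫ x : ↥(intr c L) → ℝ,
      F (extend c L h x) * (Real.exp (-(β / 2) * energyR c L (extend c L h x)) : ℂ)) /
    (gffZ c L β h : ℂ)

/-- One-step transition kernel of the simple random walk on the box, killed at the boundary:
rate `1/4` from an interior vertex to each neighbour. -/
def rwKernel (c : V) (L : ℕ) (j k : V) : ℝ :=
  if j ∈ intr c L ∧ adj j k then 1 / 4 else 0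

/-- `n`-step transition probabilities of the killed walk. -/
def rwIter (c : V) (L : ℕ) : ℕ → V → V → ℝ
  | 0 => fun j k => if j = k then 1 else 0
  | n + 1 => fun j k => ∑ m ∈ box c L, rwIter c L n j m * rwKernel c L m k

/-- The Green's function `G_Λ(j,l)`: expected occupation time of `l` (for `l` interior) by the
continuous-time simple random walk started at `j` and killed at `∂Λ`; each interior holding
time has expectation `1/4`. -/
def green (c : V) (L : ℕ) (j l : V) : ℝ := (1 / 4) * ∑' n : ℕ, rwIter c L n j l

/-- The harmonic measure `Hm_Λ(j,l)`: for `l ∈ ∂Λ`, the probability that the walk started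
at `j` first hits the boundary at `l`. -/
def harmMeas (c : V) (L : ℕ) (j l : V) : ℝ := ∑' n : ℕ, rwIter c L n j l

/-- A real, even, normalized trigonometric polynomial
`λ(x) = 1 + 2 Σ_{q=1}^N λ̂_q cos(qx)` with coefficients `coef` and degree `N`. -/
def trigPoly (coef : ℕ → ℝ) (N : ℕ) (x : ℝ) : ℝ :=
  1 + 2 * ∑ q ∈ Finset.Icc 1 N, coef q * Real.cos ((q : ℝ) * x)

/-- `(Γ,η,θ)`-sub-Gaussian coefficients (at inverse temperature `β`). -/
def subGaussian (β Γ η θ : ℝ) (coef : ℕ → ℝ) : Prop :=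
  ∀ q : ℕ, 1 ≤ q → |coef q| ≤ Γ * Real.exp ((η + θ / β) * (q : ℝ) ^ 2)

/-- The Fejér kernel `F_N(x) = 1 + Σ_{q=1}^{N−1} 2(1 − q/N) cos(qx)`. -/
def fejer (N : ℕ) (x : ℝ) : ℝ :=
  1 + ∑ q ∈ Finset.Icc 1 (N - 1), 2 * (1 - (q : ℝ) / (N : ℝ)) * Real.cos ((q : ℝ) * x)

/-- The (finite) support of a charge density within the box. -/
def suppF (c : V) (L : ℕ) (ρ : V → ℤ) : Finset V := (box c L).filter fun j => ρ j ≠ 0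

/-- `ρ` is a charge density on the box: nonempty support contained in the interior. -/
def IsDensity (c : V) (L : ℕ) (ρ : V → ℤ) : Prop :=
  (∃ j, ρ j ≠ 0) ∧ ∀ j, ρ j ≠ 0 → j ∈ intr c L

/-- The total charge `Q(ρ)`. -/
def Qcharge (c : V) (L : ℕ) (ρ : V → ℤ) : ℤ := ∑ j ∈ box c L, ρ j

/-- Diameter of a finite set of vertices in graph distance. -/
def diamF (s : Finset V) : ℕ := s.sup fun j => s.sup fun l => gdist j l

/-- The modified diameter `d_Λ(ρ)`. -/
def dLam (c : V) (L : ℕ) (ρ : V → ℤ) : ℕ :=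
  if Qcharge c L ρ ≠ 0 then
    max (diamF (suppF c L ρ)) (distFS (suppF c L ρ) (bdry c L))
  else diamF (suppF c L ρ)

/-- `‖ρ‖₂² = Σ_j ρ_j²`. -/
def norm2sq (c : V) (L : ℕ) (ρ : V → ℤ) : ℝ := ∑ j ∈ box c L, ((ρ j : ℝ)) ^ 2

/-- The `2^k × 2^k` square with corner `a`, intersected with the box. -/
def sqAt (c : V) (L k : ℕ) (a : V) : Finset V :=
  (box c L).filter fun j =>
    j.1 - a.1 ∈ Finset.Icc (0 : ℤ) (2 ^ k - 1) ∧ j.2 - a.2 ∈ Finset.Icc (0 : ℤ) (2 ^ k - 1)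

/-- `s` is a `2^k × 2^k` square in the box. -/
def IsSqr (c : V) (L k : ℕ) (s : Finset V) : Prop :=
  s.card = min (box c L).card (2 ^ (2 * k)) ∧ ∃ a ∈ box c L, s = sqAt c L k a

/-- `S` is a cover of the support of `ρ` by `2^k × 2^k` squares. -/
def IsCover (c : V) (L k : ℕ) (ρ : V → ℤ) (S : Finset (Finset V)) : Prop :=
  (∀ s ∈ S, IsSqr c L k s) ∧ ∀ j ∈ suppF c L ρ, ∃ s ∈ S, j ∈ s

/-- `S` is a minimal cover of the support of `ρ` by `2^k × 2^k` squares. -/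
def IsMinCover (c : V) (L k : ℕ) (ρ : V → ℤ) (S : Finset (Finset V)) : Prop :=
  IsCover c L k ρ S ∧ ∀ S' : Finset (Finset V), IsCover c L k ρ S' → S.card ≤ S'.card

/-- `n(ρ) = ⌈log₂(M d_Λ(ρ)^α)⌉` with `M = 2^16`. -/
def nIdx (c : V) (L : ℕ) (α : ℝ) (ρ : V → ℤ) : ℕ :=
  ⌈Real.logb 2 ((2 : ℝ) ^ 16 * (dLam c L ρ : ℝ) ^ α)⌉₊

/-- The separated part `S_k^sep(ρ)` of a cover `S` at scale `k ≥ 1`, with `M = 2^16`. -/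
def sepOf (c : V) (L k : ℕ) (α : ℝ) (ρ : V → ℤ) (S : Finset (Finset V)) : Finset (Finset V) :=
  if 1 < S.card then
    S.filter fun s => ∀ s' ∈ S, s' ≠ s →
      (2 : ℝ) * 2 ^ 16 * (2 : ℝ) ^ (α * ((k : ℝ) + 1)) ≤ (distFS s s' : ℝ)
  else if Qcharge c L ρ = 0 then ∅
  else if 2 ^ (k + 1) ≤ distFS (suppF c L ρ) (bdry c L) then S else ∅

end IVGFF

section AuxProof
open Real
namespace IVGFFAux

lemma summable_exp_neg_nat_sq {μ : ℝ} (hμ : 0 < μ) :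
    Summable fun n : ℕ => Real.exp (-μ * (n : ℝ) ^ 2) := by
  refine Summable.of_nonneg_of_le (fun n => (Real.exp_pos _).le) ?_
    (summable_geometric_of_lt_one (Real.exp_pos (-μ)).le
      (Real.exp_lt_one_iff.2 (by linarith)))
  intro n
  rw [← Real.exp_nat_mul]
  apply Real.exp_le_exp.2
  have h1 : (n : ℝ) ≤ (n : ℝ) ^ 2 := by
    have := Nat.le_self_pow (two_ne_zero) n
    exact_mod_cast this
  nlinarith

lemma summable_exp_neg_int_sq {μ : ℝ} (hμ : 0 < μ) :
    Summable fun m : ℤ => Real.exp (-μ * (m : ℝ) ^ 2) := by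
  apply Summable.of_nat_of_neg <;>
    · apply (summable_exp_neg_nat_sq hμ).congr
      intro n; push_cast; ring_nf

lemma summable_pi_fin {f : ℤ → ℝ} (hf0 : ∀ z, 0 ≤ f z) (hf : Summable f) :
    ∀ n : ℕ, Summable fun v : Fin n → ℤ => ∏ i, f (v i) := by
  intro n
  induction n with
  | zero => exact Summable.of_finite
  | succ n ih =>
    have h := (hf.mul_of_nonneg ih hf0 (fun v => Finset.prod_nonneg fun i _ => hf0 _))
    have := ((Fin.consEquiv (fun _ : Fin (n+1) => ℤ)).summable_iff
      (f := fun v : Fin (n+1) → ℤ => ∏ i, f (v i))).1 ?_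
    · exact this
    · apply h.congr
      intro p
      simp [Fin.consEquiv, Fin.prod_univ_succ]

lemma summable_pi_int {ι : Type*} [Fintype ι] {f : ℤ → ℝ} (hf0 : ∀ z, 0 ≤ f z)
    (hf : Summable f) : Summable fun v : ι → ℤ => ∏ i, f (v i) := by
  classical
  obtain ⟨e⟩ : Nonempty (ι ≃ Fin (Fintype.card ι)) := ⟨Fintype.equivFin ι⟩
  refine ((Equiv.arrowCongr e.symm (Equiv.refl ℤ)).summable_iff
    (f := fun v : ι → ℤ => ∏ i, f (v i))).1 ?_
  apply (summable_pi_fin hf0 hf (Fintype.card ι)).congr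
  intro w
  simp only [Function.comp, Equiv.arrowCongr_apply, Equiv.refl_apply, Equiv.symm_symm]
  exact (Fintype.prod_equiv e _ _ (fun i => rfl)).symm

variable {ι : Type*}

/-- Cast an integer vector to a real vector. -/
def cz (m : ι → ℤ) : ι → ℝ := fun i => (m i : ℝ)

lemma cz_add (a b : ι → ℤ) : cz (a + b) = cz a + cz b := by
  funext i; simp [cz]

lemma cz_sub (a b : ι → ℤ) : cz (a - b) = cz a - cz b := by
  funext i; simp [cz]

lemma cz_zero : cz (0 : ι → ℤ) = 0 := by funext i; simp [cz]

/-- Integer vector attached to a parity pattern. -/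
def eInt (e : ι → Bool) : ι → ℤ := fun i => if e i then 1 else 0

/-- Real vector attached to a parity pattern. -/
def bR (e : ι → Bool) : ι → ℝ := fun i => if e i then 1 else 0

lemma cz_eInt (e : ι → Bool) : cz (eInt e) = bR e := by
  funext i; simp [cz, eInt, bR, apply_ite (fun z : ℤ => (z : ℝ))]

/-- The parity re-indexing bijection `(e, n, n') ↦ (n + n' + ê, n - n')`. -/
def psi : ((ι → Bool) × ((ι → ℤ) × (ι → ℤ))) ≃ ((ι → ℤ) × (ι → ℤ)) where
  toFun p := (p.2.1 + p.2.2 + eInt p.1, p.2.1 - p.2.2)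
  invFun q := (fun i => (q.1 i + q.2 i) % 2 == 1,
    (fun i => (q.1 i + q.2 i - (q.1 i + q.2 i) % 2) / 2,
     fun i => (q.1 i - q.2 i - (q.1 i + q.2 i) % 2) / 2))
  left_inv p := by
    obtain ⟨e, n, n'⟩ := p
    refine Prod.ext ?_ (Prod.ext ?_ ?_) <;> funext i <;>
      simp only [Pi.add_apply, Pi.sub_apply, eInt, beq_iff_eq] <;>
      cases h : e i <;> simp [h] <;> omega
  right_inv q := by
    obtain ⟨u, v⟩ := q
    refine Prod.ext ?_ ?_ <;> funext i <;>
      simp only [Pi.add_apply, Pi.sub_apply, eInt, beq_iff_eq] <;>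
      omega

section Theta
variable [Fintype ι] [DecidableEq ι] {Q : (ι → ℝ) → ℝ} {lam : ℝ}

theorem summable_master (hlam : 0 < lam) (hlb : ∀ x, lam * ∑ i, x i ^ 2 ≤ Q x)
    {a c : ℝ} (ha : 0 < a) (hc : c ≠ 0) (w : ι → ℝ) :
    Summable fun n : ι → ℤ => Real.exp (-(a * Q (fun i => c * (n i : ℝ) + w i))) := by
  have hμ : 0 < a * lam * c ^ 2 / 2 := by positivity
  set μ := a * lam * c ^ 2 / 2 with hμdef
  have hsum : Summable fun n : ι → ℤ => Real.exp (a * lam * ∑ i, w i ^ 2) *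
      ∏ i, Real.exp (-μ * (n i : ℝ) ^ 2) :=
    (summable_pi_int (fun z => (Real.exp_pos _).le) (summable_exp_neg_int_sq hμ)).mul_left _
  refine Summable.of_nonneg_of_le (fun n => (Real.exp_pos _).le) (fun n => ?_) hsum
  rw [← Real.exp_sum, ← Real.exp_add]
  apply Real.exp_le_exp.2
  have h1 : lam * ∑ i, (c * (n i : ℝ) + w i) ^ 2 ≤ Q fun i => c * (n i : ℝ) + w i := hlb _
  have h3 : (c ^ 2 / 2) * (∑ i, ((n i : ℝ)) ^ 2) - ∑ i, (w i) ^ 2 ≤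
      ∑ i, (c * (n i : ℝ) + w i) ^ 2 := by
    rw [Finset.mul_sum, ← Finset.sum_sub_distrib]
    exact Finset.sum_le_sum fun i _ => by nlinarith [sq_nonneg (c * (n i : ℝ) + 2 * w i)]
  have h4 : ∑ i, (-μ * (n i : ℝ) ^ 2) = -μ * ∑ i, ((n i : ℝ)) ^ 2 := by
    rw [Finset.mul_sum]
  rw [h4]
  have h5 := mul_le_mul_of_nonneg_left h1 ha.le
  have h6 := mul_le_mul_of_nonneg_left h3 (mul_pos ha hlam).le
  rw [hμdef]
  nlinarith

noncomputable def Sfun (Q : (ι → ℝ) → ℝ) (x : ι → ℝ) : ℝ := ∑' m : ι → ℤ, Real.exp (-Q (cz m + x))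

noncomputable def Tfun (Q : (ι → ℝ) → ℝ) (w : ι → ℝ) : ℝ :=
  ∑' n : ι → ℤ, Real.exp (-(Q (cz n + cz n + w) / 2))

theorem summable_Sterm (hlam : 0 < lam) (hlb : ∀ x, lam * ∑ i, x i ^ 2 ≤ Q x) (x : ι → ℝ) :
    Summable fun m : ι → ℤ => Real.exp (-Q (cz m + x)) := by
  have h := summable_master hlam hlb (a := 1) (c := 1) one_pos one_ne_zero x
  apply h.congr
  intro n
  simp only [one_mul]
  rfl

theorem summable_Tterm (hlam : 0 < lam) (hlb : ∀ x, lam * ∑ i, x i ^ 2 ≤ Q x) (w : ι → ℝ) :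
    Summable fun n : ι → ℤ => Real.exp (-(Q (cz n + cz n + w) / 2)) := by
  have h := summable_master hlam hlb (a := 1/2) (c := 2) (by norm_num) two_ne_zero w
  apply h.congr
  intro n
  have e1 : (fun i => (2:ℝ) * (n i : ℝ) + w i) = cz n + cz n + w := by
    funext i
    simp only [Pi.add_apply, cz]
    ring
  rw [e1]
  congr 1
  ring

theorem master_identity (hpar : ∀ x y, Q (x + y) + Q (x - y) = 2 * Q x + 2 * Q y)
    (hlam : 0 < lam) (hlb : ∀ x, lam * ∑ i, x i ^ 2 ≤ Q x) (x y : ι → ℝ) :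
    Sfun Q x * Sfun Q y
      = ∑ e : ι → Bool, Tfun Q (bR e + x + y) * Tfun Q (bR e + x - y) := by
  classical
  have hQ0 : Q 0 = 0 := by
    have h := hpar 0 0
    simp only [add_zero, sub_zero] at h
    linarith
  have hdouble : ∀ z : ι → ℝ, Q (z + z) = 4 * Q z := by
    intro z
    have h := hpar z z
    rw [sub_self, hQ0] at h
    linarith
  have hhalf : ∀ a b : ι → ℝ, Q a + Q b = Q (a + b) / 2 + Q (a - b) / 2 := by
    intro a b
    set u := (2⁻¹ : ℝ) • (a + b) with hu_def
    set v := (2⁻¹ : ℝ) • (a - b) with hv_def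
    have hu : u + u = a + b := by
      funext i; simp only [hu_def, Pi.smul_apply, Pi.add_apply, Pi.sub_apply, smul_eq_mul]; ring
    have hv : v + v = a - b := by
      funext i; simp only [hv_def, Pi.smul_apply, Pi.add_apply, Pi.sub_apply, smul_eq_mul]; ring
    have ha' : u + v = a := by
      funext i
      simp only [hu_def, hv_def, Pi.smul_apply, Pi.add_apply, Pi.sub_apply, smul_eq_mul]
      ring
    have hb' : u - v = b := by
      funext i
      simp only [hu_def, hv_def, Pi.smul_apply, Pi.add_apply, Pi.sub_apply, smul_eq_mul]
      ring
    have h1 := hpar u v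
    rw [ha', hb'] at h1
    have h2 : Q (a + b) = 4 * Q u := by rw [← hu, hdouble]
    have h3 : Q (a - b) = 4 * Q v := by rw [← hv, hdouble]
    linarith
  have hmul : ∀ a b : ι → ℝ, Real.exp (-Q a) * Real.exp (-Q b)
      = Real.exp (-(Q (a + b) / 2)) * Real.exp (-(Q (a - b) / 2)) := by
    intro a b
    rw [← Real.exp_add, ← Real.exp_add]
    congr 1
    have := hhalf a b
    linarith
  set H : (ι → ℤ) × (ι → ℤ) → ℝ := fun z =>
    Real.exp (-(Q (cz z.1 + cz z.2 + (x + y)) / 2)) *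
      Real.exp (-(Q (cz z.1 - cz z.2 + (x - y)) / 2)) with hH_def
  have hsx := summable_Sterm hlam hlb x
  have hsy := summable_Sterm hlam hlb y
  have hpt : ∀ z : (ι → ℤ) × (ι → ℤ),
      Real.exp (-Q (cz z.1 + x)) * Real.exp (-Q (cz z.2 + y)) = H z := by
    intro z
    have e1 : cz z.1 + x + (cz z.2 + y) = cz z.1 + cz z.2 + (x + y) := by ring
    have e2 : cz z.1 + x - (cz z.2 + y) = cz z.1 - cz z.2 + (x - y) := by ring
    rw [hmul, e1, e2]
  have nx : Summable fun m : ι → ℤ => ‖Real.exp (-Q (cz m + x))‖ :=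
    hsx.congr fun m => by simp [Real.norm_eq_abs, Real.abs_exp]
  have ny : Summable fun m : ι → ℤ => ‖Real.exp (-Q (cz m + y))‖ :=
    hsy.congr fun m => by simp [Real.norm_eq_abs, Real.abs_exp]
  have step1 : Sfun Q x * Sfun Q y = ∑' z : (ι → ℤ) × (ι → ℤ), H z := by
    simp only [Sfun]
    rw [tsum_mul_tsum_of_summable_norm nx ny]
    exact tsum_congr hpt
  have hH : Summable H :=
    (hsx.mul_of_nonneg hsy (fun _ => (Real.exp_pos _).le) fun _ => (Real.exp_pos _).le).congr hpt
  have step3 : ∑' z : (ι → ℤ) × (ι → ℤ), H z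
      = ∑' p : (ι → Bool) × ((ι → ℤ) × (ι → ℤ)), H (psi p) := (Equiv.tsum_eq psi H).symm
  have step4 : ∀ (e : ι → Bool) (n n' : ι → ℤ), H (psi (e, n, n'))
      = Real.exp (-(Q (cz n + cz n + (bR e + x + y)) / 2)) *
        Real.exp (-(Q (cz n' + cz n' + (bR e + x - y)) / 2)) := by
    intro e n n'
    have h1 : cz ((psi (e, n, n')).1) = cz n + cz n' + bR e := by
      show cz (n + n' + eInt e) = _
      rw [cz_add, cz_add, cz_eInt]
    have h2 : cz ((psi (e, n, n')).2) = cz n - cz n' := by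
      show cz (n - n') = _
      rw [cz_sub]
    simp only [hH_def]
    rw [h1, h2]
    have e1 : cz n + cz n' + bR e + (cz n - cz n') + (x + y)
        = cz n + cz n + (bR e + x + y) := by ring
    have e2 : cz n + cz n' + bR e - (cz n - cz n') + (x - y)
        = cz n' + cz n' + (bR e + x - y) := by ring
    rw [e1, e2]
  have hHpsi : Summable fun p : (ι → Bool) × ((ι → ℤ) × (ι → ℤ)) => H (psi p) :=
    (psi.summable_iff (f := H)).2 hH
  have hper : ∀ e : ι → Bool, Summable fun q : (ι → ℤ) × (ι → ℤ) => H (psi (e, q)) := by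
    intro e
    have hf := summable_Tterm hlam hlb (bR e + x + y)
    have hg := summable_Tterm hlam hlb (bR e + x - y)
    have hprod := hf.mul_of_nonneg hg (fun _ => (Real.exp_pos _).le)
      fun _ => (Real.exp_pos _).le
    apply hprod.congr
    intro q
    exact (step4 e q.1 q.2).symm
  have step5 : ∑' p : (ι → Bool) × ((ι → ℤ) × (ι → ℤ)), H (psi p)
      = ∑ e : ι → Bool, ∑' q : (ι → ℤ) × (ι → ℤ), H (psi (e, q)) := by
    rw [Summable.tsum_prod' hHpsi hper, tsum_fintype]
  have step6 : ∀ e : ι → Bool, ∑' q : (ι → ℤ) × (ι → ℤ), H (psi (e, q))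
      = Tfun Q (bR e + x + y) * Tfun Q (bR e + x - y) := by
    intro e
    have hf := summable_Tterm hlam hlb (bR e + x + y)
    have hg := summable_Tterm hlam hlb (bR e + x - y)
    have nf : Summable fun n : ι → ℤ =>
        ‖Real.exp (-(Q (cz n + cz n + (bR e + x + y)) / 2))‖ :=
      hf.congr fun n => by simp [Real.norm_eq_abs, Real.abs_exp]
    have ng : Summable fun n : ι → ℤ =>
        ‖Real.exp (-(Q (cz n + cz n + (bR e + x - y)) / 2))‖ :=
      hg.congr fun n => by simp [Real.norm_eq_abs, Real.abs_exp]
    simp only [Tfun]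
    rw [tsum_mul_tsum_of_summable_norm nf ng]
    exact tsum_congr fun q => step4 e q.1 q.2
  rw [step1, step3, step5]
  exact Finset.sum_congr rfl fun e _ => step6 e

theorem theta_le (hpar : ∀ x y, Q (x + y) + Q (x - y) = 2 * Q x + 2 * Q y)
    (hlam : 0 < lam) (hlb : ∀ x, lam * ∑ i, x i ^ 2 ≤ Q x) (t : ι → ℝ) :
    Sfun Q t ≤ Sfun Q 0 := by
  classical
  have hQ0 : Q 0 = 0 := by
    have h := hpar 0 0
    simp only [add_zero, sub_zero] at h
    linarith
  have hSnn : ∀ x : ι → ℝ, 0 ≤ Sfun Q x := fun x =>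
    tsum_nonneg fun m => (Real.exp_pos _).le
  have hS0 : 1 ≤ Sfun Q 0 := by
    have h0 : Real.exp (-Q (cz (0 : ι → ℤ) + 0)) ≤ Sfun Q 0 :=
      Summable.le_tsum (summable_Sterm hlam hlb 0) 0 fun m _ => (Real.exp_pos _).le
    rw [cz_zero, add_zero, hQ0] at h0
    simpa using h0
  have hS0pos : 0 < Sfun Q 0 := lt_of_lt_of_le one_pos hS0
  have key4 : ∀ s : ι → ℝ, Sfun Q s ^ 4 ≤ Sfun Q (s + s) * Sfun Q 0 ^ 3 := by
    intro s
    have m1 := master_identity hpar hlam hlb s s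
    have m2 := master_identity hpar hlam hlb (s + s) 0
    have m3 := master_identity hpar hlam hlb 0 0
    have e1 : ∀ e : ι → Bool, bR e + s - s = bR e := fun e => by ring
    have e2 : ∀ e : ι → Bool, bR e + (s + s) + 0 = bR e + s + s := fun e => by ring
    have e3 : ∀ e : ι → Bool, bR e + (s + s) - 0 = bR e + s + s := fun e => by ring
    have e4 : ∀ e : ι → Bool, bR e + 0 + 0 = bR e := fun e => by ring
    have e5 : ∀ e : ι → Bool, bR e + 0 - 0 = bR e := fun e => by ring
    simp only [e1] at m1
    simp only [e2, e3] at m2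
    simp only [e4, e5] at m3
    have cs := Finset.sum_mul_sq_le_sq_mul_sq Finset.univ
      (fun e : ι → Bool => Tfun Q (bR e + s + s)) (fun e : ι → Bool => Tfun Q (bR e))
    have hsq1 : ∑ e : ι → Bool, Tfun Q (bR e + s + s) ^ 2
        = Sfun Q (s + s) * Sfun Q 0 := by
      rw [m2]
      exact Finset.sum_congr rfl fun e _ => by rw [sq]
    have hsq2 : ∑ e : ι → Bool, Tfun Q (bR e) ^ 2 = Sfun Q 0 * Sfun Q 0 := by
      rw [m3]
      exact Finset.sum_congr rfl fun e _ => by rw [sq]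
    calc Sfun Q s ^ 4 = (Sfun Q s * Sfun Q s) ^ 2 := by ring
      _ = (∑ e : ι → Bool, Tfun Q (bR e + s + s) * Tfun Q (bR e)) ^ 2 := by rw [m1]
      _ ≤ (∑ e : ι → Bool, Tfun Q (bR e + s + s) ^ 2) *
          ∑ e : ι → Bool, Tfun Q (bR e) ^ 2 := cs
      _ = (Sfun Q (s + s) * Sfun Q 0) * (Sfun Q 0 * Sfun Q 0) := by rw [hsq1, hsq2]
      _ = Sfun Q (s + s) * Sfun Q 0 ^ 3 := by ring
  -- uniform bound
  obtain ⟨Cb, hCb⟩ : ∃ C : ℝ, ∀ x : ι → ℝ, Sfun Q x ≤ C := by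
    have hμ : (0:ℝ) < lam / 2 := by positivity
    have hKs : Summable fun m : ι → ℤ =>
        Real.exp (lam * Fintype.card ι) * ∏ i, Real.exp (-(lam/2) * (m i : ℝ) ^ 2) :=
      (summable_pi_int (fun z => (Real.exp_pos _).le) (summable_exp_neg_int_sq hμ)).mul_left _
    refine ⟨∑' m : ι → ℤ,
      Real.exp (lam * Fintype.card ι) * ∏ i, Real.exp (-(lam/2) * (m i : ℝ) ^ 2), fun x => ?_⟩
    set m0 : ι → ℤ := fun i => ⌊x i⌋ with hm0
    set x' : ι → ℝ := fun i => Int.fract (x i) with hx'def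
    have hx' : cz m0 + x' = x := by
      funext i
      simp only [Pi.add_apply, cz, hm0, hx'def]
      exact Int.floor_add_fract (x i)
    have hshift : Sfun Q x = Sfun Q x' := by
      simp only [Sfun]
      refine (tsum_congr fun m => ?_).trans
        (Equiv.tsum_eq (Equiv.addRight m0) fun m => Real.exp (-Q (cz m + x')))
      have harg : cz (m + m0) + x' = cz m + x := by
        rw [cz_add, ← hx']
        ring
      simp only [Equiv.coe_addRight]
      rw [harg]
    rw [hshift]
    refine Summable.tsum_le_tsum (fun m => ?_) (summable_Sterm hlam hlb x') hKs
    rw [← Real.exp_sum, ← Real.exp_add]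
    apply Real.exp_le_exp.2
    have h4 : lam * ∑ i, ((cz m + x') i) ^ 2 ≤ Q (cz m + x') := hlb _
    have h2 : ∀ i : ι, (lam/2) * ((m i : ℝ)) ^ 2 - lam * 1 ≤ lam * ((cz m + x') i) ^ 2 := by
      intro i
      have hf0 : 0 ≤ x' i := Int.fract_nonneg _
      have hf1 : x' i ≤ 1 := (Int.fract_lt_one _).le
      simp only [Pi.add_apply, cz]
      have hpt : ((m i : ℝ)) ^ 2 / 2 - 1 ≤ ((m i : ℝ) + x' i) ^ 2 := by
        nlinarith [sq_nonneg ((m i : ℝ) + 2 * x' i), sq_nonneg (x' i)]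
      nlinarith [mul_le_mul_of_nonneg_left hpt hlam.le]
    have h3 : ∑ i, ((lam/2) * ((m i : ℝ)) ^ 2 - lam * 1)
        ≤ ∑ i, lam * ((cz m + x') i) ^ 2 := Finset.sum_le_sum fun i _ => h2 i
    have h6 : ∑ i, ((lam/2) * ((m i : ℝ)) ^ 2 - lam * 1)
        = (∑ i, (lam/2) * ((m i : ℝ)) ^ 2) - (Fintype.card ι : ℝ) * lam := by
      rw [Finset.sum_sub_distrib, Finset.sum_const, Finset.card_univ, nsmul_eq_mul]
      ring
    have h7 : ∑ i, lam * ((cz m + x') i) ^ 2 = lam * ∑ i, ((cz m + x') i) ^ 2 :=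
      (Finset.mul_sum _ _ _).symm
    have h8 : ∑ i, (-(lam/2) * ((m i : ℝ)) ^ 2) = -∑ i, (lam/2) * ((m i : ℝ)) ^ 2 := by
      rw [← Finset.sum_neg_distrib]
      exact Finset.sum_congr rfl fun i _ => by ring
    rw [h8]
    rw [h6, h7] at h3
    linarith
  -- iteration
  by_contra hcon
  push_neg at hcon
  set ρ := Sfun Q t / Sfun Q 0 with hρ
  have hρ1 : 1 < ρ := (one_lt_div hS0pos).2 hcon
  let d : ℕ → (ι → ℝ) := fun k => Nat.rec t (fun _ s => s + s) k
  have hd : ∀ k, d (k + 1) = d k + d k := fun k => rfl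
  have hd0 : d 0 = t := rfl
  have iter : ∀ k : ℕ, Sfun Q t ^ (4 ^ k) ≤ Sfun Q (d k) * Sfun Q 0 ^ (4 ^ k - 1) := by
    intro k
    induction k with
    | zero => simpa [hd0] using le_refl (Sfun Q t)
    | succ k ih =>
      have h4k : 1 ≤ 4 ^ k := Nat.one_le_pow _ _ (by norm_num)
      calc Sfun Q t ^ 4 ^ (k + 1) = (Sfun Q t ^ 4 ^ k) ^ 4 := by
            rw [← pow_mul, pow_succ]
        _ ≤ (Sfun Q (d k) * Sfun Q 0 ^ (4 ^ k - 1)) ^ 4 :=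
            pow_le_pow_left₀ (pow_nonneg (hSnn t) _) ih 4
        _ = Sfun Q (d k) ^ 4 * Sfun Q 0 ^ (4 * (4 ^ k - 1)) := by
            rw [mul_pow, ← pow_mul]
            ring_nf
        _ ≤ (Sfun Q (d k + d k) * Sfun Q 0 ^ 3) * Sfun Q 0 ^ (4 * (4 ^ k - 1)) :=
            mul_le_mul_of_nonneg_right (key4 (d k)) (pow_nonneg hS0pos.le _)
        _ = Sfun Q (d (k + 1)) * Sfun Q 0 ^ (4 ^ (k + 1) - 1) := by
            rw [hd, mul_assoc, ← pow_add]
            congr 2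
            have : 4 ^ (k + 1) = 4 * 4 ^ k := by rw [pow_succ]; ring
            omega
  have hup : ∀ k : ℕ, ρ ^ (4 ^ k) ≤ Cb / Sfun Q 0 := by
    intro k
    have h4k : 1 ≤ 4 ^ k := Nat.one_le_pow _ _ (by norm_num)
    have h := (iter k).trans
      (mul_le_mul_of_nonneg_right (hCb (d k)) (pow_nonneg hS0pos.le _))
    rw [hρ, div_pow, div_le_div_iff₀ (pow_pos hS0pos _) hS0pos]
    have hsplit : Sfun Q 0 ^ (4 ^ k) = Sfun Q 0 ^ (4 ^ k - 1) * Sfun Q 0 := by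
      rw [← pow_succ]
      congr 1
      omega
    calc Sfun Q t ^ 4 ^ k * Sfun Q 0 ≤ (Cb * Sfun Q 0 ^ (4 ^ k - 1)) * Sfun Q 0 :=
          mul_le_mul_of_nonneg_right h hS0pos.le
      _ = Cb * Sfun Q 0 ^ (4 ^ k) := by rw [hsplit]; ring
  obtain ⟨k, hk⟩ := pow_unbounded_of_one_lt (Cb / Sfun Q 0) hρ1
  have hkk : ρ ^ k ≤ ρ ^ (4 ^ k) :=
    pow_le_pow_right₀ hρ1.le (Nat.lt_pow_self (n := k) (by norm_num)).le
  have := hk.trans_le (hkk.trans (hup k))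
  exact lt_irrefl _ this

end Theta
end IVGFFAux

namespace IVGFFBox
open IVGFF IVGFFAux

attribute [local instance] Classical.propDecidable

lemma adj_ne {j l : V} (h : adj j l) : j ≠ l := by
  rintro rfl
  simp [adj] at h

lemma adj_symm {j l : V} (h : adj j l) : adj l j := by
  unfold adj at *
  rw [abs_sub_comm l.1 j.1, abs_sub_comm l.2 j.2]
  exact h

lemma mem_box_iff {L : ℕ} {j : V} :
    j ∈ box 0 L ↔ 0 ≤ j.1 ∧ j.1 ≤ (L:ℤ) - 1 ∧ 0 ≤ j.2 ∧ j.2 ≤ (L:ℤ) - 1 := by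
  simp only [box, Finset.mem_product, Finset.mem_Icc, Prod.fst_zero, Prod.snd_zero, zero_add]
  tauto

lemma mem_bdry_iff {L : ℕ} {j : V} :
    j ∈ bdry 0 L ↔ (j ∈ box 0 L ∧
      (j.1 = 0 ∨ j.1 = (L:ℤ) - 1 ∨ j.2 = 0 ∨ j.2 = (L:ℤ) - 1)) := by
  simp only [bdry, Finset.mem_filter, Prod.fst_zero, Prod.snd_zero, zero_add]

lemma mem_intr_iff {L : ℕ} {j : V} :
    j ∈ intr 0 L ↔ 1 ≤ j.1 ∧ j.1 ≤ (L:ℤ) - 2 ∧ 1 ≤ j.2 ∧ j.2 ≤ (L:ℤ) - 2 := by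
  simp only [intr, Finset.mem_sdiff, mem_bdry_iff, mem_box_iff]
  constructor
  · rintro ⟨⟨h1, h2, h3, h4⟩, hnb⟩
    refine ⟨?_, ?_, ?_, ?_⟩ <;> by_contra hc <;>
      exact hnb ⟨⟨h1, h2, h3, h4⟩, by omega⟩
  · rintro ⟨h1, h2, h3, h4⟩
    exact ⟨⟨by omega, by omega, by omega, by omega⟩, by rintro ⟨-, h⟩; omega⟩

lemma hedge_mem {L : ℕ} {a b : ℤ} (h1 : 0 ≤ a) (h2 : a ≤ (L:ℤ) - 2) (h3 : 0 ≤ b)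
    (h4 : b ≤ (L:ℤ) - 1) : ((a, b), (a + 1, b)) ∈ edges 0 L := by
  refine Finset.mem_filter.2 ⟨Finset.mem_product.2
    ⟨mem_box_iff.2 ⟨by dsimp only; omega, by dsimp only; omega, by dsimp only; omega,
        by dsimp only; omega⟩,
     mem_box_iff.2 ⟨by dsimp only; omega, by dsimp only; omega, by dsimp only; omega,
        by dsimp only; omega⟩⟩, ?_, ?_⟩
  · show adj (a, b) (a + 1, b)
    unfold adj
    have e1 : a - (a + 1) = -1 := by ring
    simp [e1]
  · left
    simp

/-- Summation by parts on the box. -/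
lemma sum_lap (L : ℕ) (φ ψ : V → ℝ) :
    ∑ j ∈ box 0 L, φ j * lap 0 L ψ j
      = -∑ p ∈ edges 0 L, (φ p.1 - φ p.2) * (ψ p.1 - ψ p.2) := by
  have step1 : ∑ j ∈ box 0 L, φ j * lap 0 L ψ j
      = ∑ p ∈ (box 0 L ×ˢ box 0 L).filter (fun p => adj p.1 p.2),
          φ p.1 * (ψ p.2 - ψ p.1) := by
    calc ∑ j ∈ box 0 L, φ j * lap 0 L ψ j
        = ∑ j ∈ box 0 L, ∑ l ∈ box 0 L,
            (if adj j l then φ j * (ψ l - ψ j) else 0) := by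
          apply Finset.sum_congr rfl
          intro j _
          simp only [lap]
          rw [Finset.mul_sum, Finset.sum_filter]
      _ = ∑ p ∈ box 0 L ×ˢ box 0 L, (if adj p.1 p.2 then φ p.1 * (ψ p.2 - ψ p.1) else 0) := by
          rw [Finset.sum_product]
      _ = _ := by rw [Finset.sum_filter]
  have hdisj : Disjoint (edges 0 L) ((edges 0 L).image Prod.swap) := by
    rw [Finset.disjoint_left]
    intro p hp hps
    obtain ⟨q, hq, rfl⟩ := Finset.mem_image.1 hps
    have h1 := (Finset.mem_filter.1 hp).2.2
    have h2 := (Finset.mem_filter.1 hq).2.2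
    simp only [Prod.fst_swap, Prod.snd_swap] at h1
    omega
  have hcover : (box 0 L ×ˢ box 0 L).filter (fun p => adj p.1 p.2)
      = edges 0 L ∪ (edges 0 L).image Prod.swap := by
    ext p
    rw [Finset.mem_union, Finset.mem_filter]
    constructor
    · rintro ⟨hbb, hadj⟩
      have hne' : ¬(p.1.1 = p.2.1 ∧ p.1.2 = p.2.2) := fun h =>
        adj_ne hadj (Prod.ext h.1 h.2)
      by_cases hord : p.1.1 < p.2.1 ∨ (p.1.1 = p.2.1 ∧ p.1.2 < p.2.2)
      · exact Or.inl (Finset.mem_filter.2 ⟨hbb, hadj, hord⟩)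
      · refine Or.inr (Finset.mem_image.2 ⟨p.swap, Finset.mem_filter.2
          ⟨?_, adj_symm hadj, ?_⟩, p.swap_swap⟩)
        · exact Finset.mem_product.2
            ⟨(Finset.mem_product.1 hbb).2, (Finset.mem_product.1 hbb).1⟩
        · simp only [Prod.fst_swap, Prod.snd_swap]
          omega
    · rintro (h | h)
      · have h' := Finset.mem_filter.1 h
        exact ⟨h'.1, h'.2.1⟩
      · obtain ⟨q, hq, rfl⟩ := Finset.mem_image.1 h
        have hq' := Finset.mem_filter.1 hq
        refine ⟨Finset.mem_product.2
          ⟨(Finset.mem_product.1 hq'.1).2, (Finset.mem_product.1 hq'.1).1⟩,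
          adj_symm hq'.2.1⟩
  rw [step1, hcover, Finset.sum_union hdisj,
    Finset.sum_image (fun a _ b _ h => Prod.swap_injective h)]
  rw [← Finset.sum_neg_distrib, ← Finset.sum_add_distrib]
  apply Finset.sum_congr rfl
  intro p _
  simp only [Prod.fst_swap, Prod.snd_swap]
  ring

end IVGFFBox

namespace IVGFFBox
open IVGFF IVGFFAux

/-- Extension of an interior field by zero. -/
noncomputable def embR (L : ℕ) (y : {j // j ∈ intr 0 L} → ℝ) : V → ℝ :=
  fun j => if h : j ∈ intr 0 L then y ⟨j, h⟩ else 0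

lemma embR_apply {L : ℕ} (y : {j // j ∈ intr 0 L} → ℝ) (i : {j // j ∈ intr 0 L}) :
    embR L y i.1 = y i := by
  simp [embR]

lemma embR_vanish {L : ℕ} (y : {j // j ∈ intr 0 L} → ℝ) {j : V} (h : j ∉ intr 0 L) :
    embR L y j = 0 := by
  simp [embR, h]

lemma embR_add {L : ℕ} (y z : {j // j ∈ intr 0 L} → ℝ) :
    embR L (y + z) = embR L y + embR L z := by
  funext j
  by_cases h : j ∈ intr 0 L <;> simp [embR, h]

lemma embR_sub {L : ℕ} (y z : {j // j ∈ intr 0 L} → ℝ) :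
    embR L (y - z) = embR L y - embR L z := by
  funext j
  by_cases h : j ∈ intr 0 L <;> simp [embR, h]

/-- The quadratic form associated to the Dirichlet energy on interior fields. -/
noncomputable def Qf (L : ℕ) (β : ℝ) (y : {j // j ∈ intr 0 L} → ℝ) : ℝ :=
  β / 2 * energyR 0 L (embR L y)

lemma energyR_nonneg (L : ℕ) (φ : V → ℝ) : 0 ≤ energyR 0 L φ :=
  Finset.sum_nonneg fun p _ => sq_nonneg _

lemma Qf_par {L : ℕ} {β : ℝ} (y z : {j // j ∈ intr 0 L} → ℝ) :
    Qf L β (y + z) + Qf L β (y - z) = 2 * Qf L β y + 2 * Qf L β z := by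
  have h : energyR 0 L (embR L y + embR L z) + energyR 0 L (embR L y - embR L z)
      = 2 * energyR 0 L (embR L y) + 2 * energyR 0 L (embR L z) := by
    simp only [energyR]
    rw [← Finset.sum_add_distrib, Finset.mul_sum, Finset.mul_sum, ← Finset.sum_add_distrib]
    apply Finset.sum_congr rfl
    intro p _
    simp only [Pi.add_apply, Pi.sub_apply]
    ring
  simp only [Qf, embR_add, embR_sub]
  linear_combination (β/2) * h

lemma card_box (L : ℕ) : (box 0 L).card = L * L := by
  rw [box, Finset.card_product]
  simp [Int.card_Icc]

lemma Qf_lb {L : ℕ} (hL : 2 < L) {β : ℝ} (hβ : 0 < β) (y : {j // j ∈ intr 0 L} → ℝ) :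
    (β / (2 * (L:ℝ)^3)) * ∑ i, y i ^ 2 ≤ Qf L β y := by
  classical
  have hL0 : (0:ℝ) < (L:ℝ) := by
    have : (0:ℕ) < L := by omega
    exact_mod_cast this
  set φ := embR L y with hφ
  set E := energyR 0 L φ with hEdef
  have hE0 : 0 ≤ E := energyR_nonneg L φ
  have hpt : ∀ i : {j // j ∈ intr 0 L}, y i ^ 2 ≤ (L:ℝ) * E := by
    rintro ⟨⟨j1, j2⟩, hj⟩
    have hjc := mem_intr_iff.1 hj
    set N : ℕ := ((L:ℤ) - 1 - j1).toNat with hN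
    have hNc : (N:ℤ) = (L:ℤ) - 1 - j1 := Int.toNat_of_nonneg (by omega)
    set g : ℕ → ℝ := fun k => φ (j1 + (k:ℤ), j2) with hg
    have htel : ∑ k ∈ Finset.range N, (g k - g (k+1)) = g 0 - g N :=
      Finset.sum_range_sub' g N
    have hgN : g N = 0 := by
      apply embR_vanish
      simp only [mem_intr_iff]
      omega
    have hg0 : g 0 = y ⟨(j1, j2), hj⟩ := by
      have h0 : g 0 = φ (j1, j2) := by simp [hg]
      rw [h0, hφ]
      exact embR_apply y ⟨(j1, j2), hj⟩
    have hrepr : y ⟨(j1, j2), hj⟩ = ∑ k ∈ Finset.range N, (g k - g (k+1)) := by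
      rw [htel, hgN, hg0, sub_zero]
    have hcs := Finset.sum_mul_sq_le_sq_mul_sq (Finset.range N)
      (fun k => g k - g (k+1)) (fun _ => (1:ℝ))
    simp only [mul_one, one_pow, Finset.sum_const, Finset.card_range, nsmul_eq_mul] at hcs
    have hsub : ∑ k ∈ Finset.range N, (g k - g (k+1)) ^ 2 ≤ E := by
      set em : ℕ → V × V := fun k => ((j1 + (k:ℤ), j2), (j1 + (k:ℤ) + 1, j2)) with hem
      have hinj : ∀ a ∈ Finset.range N, ∀ b ∈ Finset.range N, em a = em b → a = b := by
        intro a _ b _ hab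
        simp only [hem, Prod.mk.injEq] at hab
        omega
      have heq : ∑ k ∈ Finset.range N, (g k - g (k+1)) ^ 2
          = ∑ p ∈ (Finset.range N).image em, (φ p.1 - φ p.2) ^ 2 := by
        rw [Finset.sum_image hinj]
        apply Finset.sum_congr rfl
        intro k _
        simp only [hem, hg, Nat.cast_add, Nat.cast_one, ← add_assoc]
      rw [heq, hEdef]
      simp only [energyR]
      apply Finset.sum_le_sum_of_subset_of_nonneg
      · intro p hp
        obtain ⟨k, hk, rfl⟩ := Finset.mem_image.1 hp
        have hkN := Finset.mem_range.1 hk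
        exact hedge_mem (by omega) (by omega) (by omega) (by omega)
      · intro p _ _
        exact sq_nonneg _
    have hNL : (N:ℝ) ≤ (L:ℝ) := by
      have h1 : (N:ℤ) ≤ (L:ℤ) := by omega
      exact_mod_cast h1
    calc y ⟨(j1, j2), hj⟩ ^ 2
        = (∑ k ∈ Finset.range N, (g k - g (k+1))) ^ 2 := by rw [hrepr]
      _ ≤ (∑ k ∈ Finset.range N, (g k - g (k+1)) ^ 2) * (N:ℝ) := hcs
      _ ≤ E * (L:ℝ) := by
          apply mul_le_mul hsub hNL (by positivity) hE0
      _ = (L:ℝ) * E := mul_comm _ _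
  have hsum : ∑ i, y i ^ 2 ≤ (Fintype.card {j // j ∈ intr 0 L} : ℝ) * ((L:ℝ) * E) := by
    calc ∑ i, y i ^ 2 ≤ ∑ _i : {j // j ∈ intr 0 L}, (L:ℝ) * E :=
          Finset.sum_le_sum fun i _ => hpt i
      _ = _ := by rw [Finset.sum_const, Finset.card_univ, nsmul_eq_mul]
  have hcard : (Fintype.card {j // j ∈ intr 0 L} : ℝ) ≤ (L:ℝ) * (L:ℝ) := by
    have h1 : Fintype.card {j // j ∈ intr 0 L} = (intr 0 L).card := Fintype.card_coe _
    have h2 : (intr 0 L).card ≤ (box 0 L).card := Finset.card_le_card Finset.sdiff_subset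
    rw [card_box] at h2
    rw [h1]
    calc ((intr 0 L).card : ℝ) ≤ ((L * L : ℕ) : ℝ) := by exact_mod_cast h2
      _ = (L:ℝ) * (L:ℝ) := by push_cast; ring
  have htotal : ∑ i, y i ^ 2 ≤ (L:ℝ)^3 * E := by
    have hLE : (0:ℝ) ≤ (L:ℝ) * E := by positivity
    calc ∑ i, y i ^ 2 ≤ _ := hsum
      _ ≤ ((L:ℝ) * (L:ℝ)) * ((L:ℝ) * E) := mul_le_mul_of_nonneg_right hcard hLE
      _ = (L:ℝ)^3 * E := by ring
  have hfac : β / (2*(L:ℝ)^3) * ((L:ℝ)^3 * E) = β/2 * E := by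
    field_simp
  calc β / (2*(L:ℝ)^3) * ∑ i, y i ^ 2 ≤ β/(2*(L:ℝ)^3) * ((L:ℝ)^3 * E) := by
        apply mul_le_mul_of_nonneg_left htotal (by positivity)
    _ = β/2 * E := hfac
    _ = Qf L β y := by rw [Qf, ← hφ, ← hEdef]

end IVGFFBox

end AuxProof

/-- Upper bound on the moment generating function of the IV-GFF with zero
boundary condition: `E[e^{⟨m,f⟩}] ≤ exp(⟨σ,f⟩/(2β))` for `f ∈ Harm(Λ)^⊥`. -/
theorem iv_mgf_upper_bound (L : ℕ) (hL : 2 < L) (β : ℝ) (hβ : 0 < β) (f σ : IVGFF.V → ℝ)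
    (hf : ∀ j ∈ IVGFF.box 0 L, f j = - IVGFF.lap 0 L σ j)
    (hσ : ∀ j, j ∉ IVGFF.intr 0 L → σ j = 0) :
    IVGFF.ivExp 0 L β 0 (fun m => Real.exp (IVGFF.dotI 0 L m f)) ≤
      Real.exp (IVGFF.dot 0 L σ f / (2 * β)) := by
  classical
  have hβ0 : β ≠ 0 := ne_of_gt hβ
  -- the shift vector
  set t : {j // j ∈ IVGFF.intr 0 L} → ℝ := (fun i => -(σ i.1) / β) with ht
  -- the configuration bijection
  set emb : ({j // j ∈ IVGFF.intr 0 L} → ℤ) → (IVGFF.V → ℤ) :=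
    (fun x j => if h : j ∈ IVGFF.intr 0 L then x ⟨j, h⟩ else 0) with hemb
  have hmem : ∀ x, emb x ∈ IVGFF.ivConfigs 0 L 0 := by
    intro x
    constructor
    · intro j hj
      have hnj : j ∉ IVGFF.intr 0 L := by
        intro hcon
        exact absurd hj (Finset.mem_sdiff.1 hcon).2
      simp [hemb, hnj]
    · intro j hj
      have hnj : j ∉ IVGFF.intr 0 L := fun hcon => hj (Finset.mem_sdiff.1 hcon).1
      simp [hemb, hnj]
  set E : ({j // j ∈ IVGFF.intr 0 L} → ℤ) ≃ ↥(IVGFF.ivConfigs 0 L 0) :=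
    { toFun := fun x => ⟨emb x, hmem x⟩
      invFun := fun g i => g.1 i.1
      left_inv := fun x => by
        funext i
        simp [hemb]
      right_inv := fun g => by
        apply Subtype.ext
        funext j
        by_cases h : j ∈ IVGFF.intr 0 L
        · simp [hemb, h]
        · simp only [hemb, dif_neg h]
          by_cases hb : j ∈ IVGFF.box 0 L
          · have hbd : j ∈ IVGFF.bdry 0 L := by
              by_contra hc
              exact h (Finset.mem_sdiff.2 ⟨hb, hc⟩)
            have hg := g.2.1 j hbd
            simp only [Pi.zero_apply] at hg
            exact hg.symm
          · exact (g.2.2 j hb).symm } with hE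
  -- cast of configurations
  have hembcast : ∀ x : {j // j ∈ IVGFF.intr 0 L} → ℤ,
      IVGFFBox.embR L (IVGFFAux.cz x) = fun j => ((emb x j : ℤ) : ℝ) := by
    intro x
    funext j
    by_cases h : j ∈ IVGFF.intr 0 L <;>
      simp [IVGFFBox.embR, hemb, h, IVGFFAux.cz]
  -- summation by parts consequences
  have hdot : ∀ φ : IVGFF.V → ℝ, ∑ j ∈ IVGFF.box 0 L, φ j * f j
      = ∑ p ∈ IVGFF.edges 0 L, (φ p.1 - φ p.2) * (σ p.1 - σ p.2) := by
    intro φ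
    have h1 : ∑ j ∈ IVGFF.box 0 L, φ j * f j
        = -∑ j ∈ IVGFF.box 0 L, φ j * IVGFF.lap 0 L σ j := by
      rw [← Finset.sum_neg_distrib]
      apply Finset.sum_congr rfl
      intro j hj
      rw [hf j hj]
      ring
    rw [h1, IVGFFBox.sum_lap, neg_neg]
  have hdotσ : IVGFF.dot 0 L σ f = IVGFF.energyR 0 L σ := by
    rw [IVGFF.dot, hdot σ, IVGFF.energyR]
    exact Finset.sum_congr rfl fun p _ => by ring
  -- energy expansion
  have hexp : ∀ φ : IVGFF.V → ℝ, IVGFF.energyR 0 L (φ - β⁻¹ • σ)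
      = IVGFF.energyR 0 L φ
        - 2 * β⁻¹ * (∑ p ∈ IVGFF.edges 0 L, (φ p.1 - φ p.2) * (σ p.1 - σ p.2))
        + β⁻¹ ^ 2 * IVGFF.energyR 0 L σ := by
    intro φ
    simp only [IVGFF.energyR, Finset.mul_sum, ← Finset.sum_sub_distrib,
      ← Finset.sum_add_distrib]
    apply Finset.sum_congr rfl
    intro p _
    simp only [Pi.sub_apply, Pi.smul_apply, smul_eq_mul]
    ring
  -- the shifted embedding
  have hshift : ∀ x : {j // j ∈ IVGFF.intr 0 L} → ℤ,
      IVGFFBox.embR L (IVGFFAux.cz x + t)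
        = IVGFFBox.embR L (IVGFFAux.cz x) - β⁻¹ • σ := by
    intro x
    funext j
    by_cases h : j ∈ IVGFF.intr 0 L
    · have h1 := IVGFFBox.embR_apply (IVGFFAux.cz x + t) ⟨j, h⟩
      have h2 := IVGFFBox.embR_apply (IVGFFAux.cz x) ⟨j, h⟩
      rw [Pi.sub_apply, Pi.smul_apply, smul_eq_mul]
      rw [show IVGFFBox.embR L (IVGFFAux.cz x + t) j
          = (IVGFFAux.cz x + t) ⟨j, h⟩ from h1,
        show IVGFFBox.embR L (IVGFFAux.cz x) j = IVGFFAux.cz x ⟨j, h⟩ from h2,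
        Pi.add_apply, ht]
      field_simp
      ring
    · simp only [IVGFFBox.embR, dif_neg h, Pi.sub_apply, Pi.smul_apply, smul_eq_mul,
        hσ j h]
      ring
  -- energy of an integer configuration
  have hcastE : ∀ x : {j // j ∈ IVGFF.intr 0 L} → ℤ,
      IVGFF.energyI 0 L (emb x) = IVGFF.energyR 0 L (IVGFFBox.embR L (IVGFFAux.cz x)) := by
    intro x
    rw [hembcast x]
    simp only [IVGFF.energyI, IVGFF.energyR]
  -- pointwise exponent identity
  have hptwise : ∀ x : {j // j ∈ IVGFF.intr 0 L} → ℤ,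
      IVGFF.ivWeight 0 L β (emb x) * Real.exp (IVGFF.dotI 0 L (emb x) f)
        = Real.exp (IVGFF.dot 0 L σ f / (2 * β)) *
            Real.exp (-(IVGFFBox.Qf L β (IVGFFAux.cz x + t))) := by
    intro x
    have hD : IVGFF.dotI 0 L (emb x) f
        = ∑ p ∈ IVGFF.edges 0 L, (IVGFFBox.embR L (IVGFFAux.cz x) p.1
            - IVGFFBox.embR L (IVGFFAux.cz x) p.2) * (σ p.1 - σ p.2) := by
      rw [IVGFF.dotI, ← hdot (IVGFFBox.embR L (IVGFFAux.cz x))]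
      apply Finset.sum_congr rfl
      intro j _
      rw [hembcast x]
    have hQ : IVGFFBox.Qf L β (IVGFFAux.cz x + t)
        = β / 2 * IVGFF.energyR 0 L (IVGFFBox.embR L (IVGFFAux.cz x))
          - (∑ p ∈ IVGFF.edges 0 L, (IVGFFBox.embR L (IVGFFAux.cz x) p.1
              - IVGFFBox.embR L (IVGFFAux.cz x) p.2) * (σ p.1 - σ p.2))
          + 1 / (2 * β) * IVGFF.energyR 0 L σ := by
      rw [IVGFFBox.Qf, hshift x, hexp]
      field_simp
    rw [IVGFF.ivWeight, hcastE x, ← Real.exp_add, ← Real.exp_add, hD, hQ, hdotσ]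
    congr 1
    field_simp
    ring
  -- identification of the partition function and the numerator
  have hnum : (∑' g : ↥(IVGFF.ivConfigs 0 L 0), IVGFF.ivWeight 0 L β g.1 *
        Real.exp (IVGFF.dotI 0 L g.1 f))
      = Real.exp (IVGFF.dot 0 L σ f / (2 * β)) * IVGFFAux.Sfun (IVGFFBox.Qf L β) t := by
    rw [← Equiv.tsum_eq E]
    rw [IVGFFAux.Sfun, ← tsum_mul_left]
    exact tsum_congr fun x => hptwise x
  have hden : IVGFF.ivZ 0 L β 0 = IVGFFAux.Sfun (IVGFFBox.Qf L β) 0 := by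
    rw [IVGFF.ivZ, ← Equiv.tsum_eq E, IVGFFAux.Sfun]
    refine tsum_congr fun x => ?_
    have hEx : (↑(E x) : IVGFF.V → ℤ) = emb x := rfl
    rw [hEx, add_zero, IVGFF.ivWeight, hcastE x, IVGFFBox.Qf]
    congr 1
    ring
  -- the ingredients of the theta bound
  have hlam : (0:ℝ) < β / (2 * (L:ℝ)^3) := by
    have hL0 : (0:ℝ) < (L:ℝ) := by
      have : (0:ℕ) < L := by omega
      exact_mod_cast this
    positivity
  have hlb : ∀ y : {j // j ∈ IVGFF.intr 0 L} → ℝ,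
      (β / (2 * (L:ℝ)^3)) * ∑ i, y i ^ 2 ≤ IVGFFBox.Qf L β y :=
    fun y => IVGFFBox.Qf_lb hL hβ y
  have hpar : ∀ y z : {j // j ∈ IVGFF.intr 0 L} → ℝ,
      IVGFFBox.Qf L β (y + z) + IVGFFBox.Qf L β (y - z)
        = 2 * IVGFFBox.Qf L β y + 2 * IVGFFBox.Qf L β z :=
    fun y z => IVGFFBox.Qf_par y z
  have hθ := IVGFFAux.theta_le hpar hlam hlb t
  -- positivity of the partition function
  have hQ0 : IVGFFBox.Qf L β (0 : {j // j ∈ IVGFF.intr 0 L} → ℝ) = 0 := by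
    have h0 : IVGFFBox.embR L (0 : {j // j ∈ IVGFF.intr 0 L} → ℝ) = fun _ => 0 := by
      funext j
      by_cases h : j ∈ IVGFF.intr 0 L <;> simp [IVGFFBox.embR, h]
    simp [IVGFFBox.Qf, h0, IVGFF.energyR]
  have hS0 : (1:ℝ) ≤ IVGFFAux.Sfun (IVGFFBox.Qf L β) 0 := by
    have h0 : Real.exp (-(IVGFFBox.Qf L β) (IVGFFAux.cz (0 : {j // j ∈ IVGFF.intr 0 L} → ℤ) + 0))
        ≤ IVGFFAux.Sfun (IVGFFBox.Qf L β) 0 :=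
      Summable.le_tsum (IVGFFAux.summable_Sterm hlam hlb 0) 0 fun m _ => (Real.exp_pos _).le
    rw [IVGFFAux.cz_zero, add_zero, hQ0] at h0
    simpa using h0
  have hS0pos : (0:ℝ) < IVGFFAux.Sfun (IVGFFBox.Qf L β) 0 := lt_of_lt_of_le one_pos hS0
  -- conclusion
  rw [IVGFF.ivExp, hnum, hden, div_le_iff₀ hS0pos]
  calc Real.exp (IVGFF.dot 0 L σ f / (2 * β)) * IVGFFAux.Sfun (IVGFFBox.Qf L β) t
      ≤ Real.exp (IVGFF.dot 0 L σ f / (2 * β)) * IVGFFAux.Sfun (IVGFFBox.Qf L β) 0 :=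
        mul_le_mul_of_nonneg_left hθ (Real.exp_pos _).le
    _ = _ := rfl
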